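/- For each vertex a ∈ V_K = {-1,1}^K with blocks of constancy of lengths M_1, ..., M_N (so M_1 + ... + M_N = K), the number of neighbors b ≠ a of a in G_K equals the number of sequences (ε_1,...,ε_N) ∈ {0,1}^N with no two indices m < m' satisfying ε_m = ε_{m'} = 1, m' - m even, and ε_j = 0 for all m < j < m', weighted by ∏_{m: ε_m=1} M_m, summed over all such nonzero sequences. -/

import Mathlib

open MeasureTheory ProbabilityTheory Finset

noncomputable section

/-- The sample space of the coupled construction: `ε`, `(α_k)`, `(β_k)`. -/
abbrev Omega (K : ℕ) := Bool × (Fin K → Fin 3) × (Fin K → Bool)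

/-- The uniform probability measure on `Omega K`; its coordinates are independent,
`ε` is uniform on `{-1,1}` (via `Bool`), each `α_k` is Bernoulli(1/3)
(`α_k = 1` iff the `Fin 3` coordinate equals `0`), each `β_k` uniform on `{-1,1}`. -/
def unif (K : ℕ) : Measure (Omega K) := (PMF.uniformOfFintype (Omega K)).toMeasure

def sgn (b : Bool) : ℤ := if b then 1 else -1

def epsRV {K : ℕ} (ω : Omega K) : ℤ := sgn ω.1

def alphaRV {K : ℕ} (k : Fin K) (ω : Omega K) : ℤ := if ω.2.1 k = 0 then 1 else 0

def alphaN {K : ℕ} (k : Fin K) (ω : Omega K) : ℕ := if ω.2.1 k = 0 then 1 else 0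

def betaRV {K : ℕ} (k : Fin K) (ω : Omega K) : ℤ := sgn (ω.2.2 k)

/-- `γ_{j+1} = ε · (-1)^{α_1 + ⋯ + α_j}` (0-indexed: `gammaRV j` is the paper's `γ_{j+1}`). -/
def gammaRV {K : ℕ} (j : ℕ) (ω : Omega K) : ℤ :=
  epsRV ω * (-1) ^ (∑ k ∈ Finset.univ.filter (fun k : Fin K => (k : ℕ) < j), alphaN k ω)

/-- `A_k = (1-α_k)β_k + α_k γ_k`. -/
def ARV {K : ℕ} (k : Fin K) (ω : Omega K) : ℤ :=
  (1 - alphaRV k ω) * betaRV k ω + alphaRV k ω * gammaRV (k : ℕ) ω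

/-- `B_k = (1-α_k)β_k - α_k γ_k`. -/
def BRV {K : ℕ} (k : Fin K) (ω : Omega K) : ℤ :=
  (1 - alphaRV k ω) * betaRV k ω - alphaRV k ω * gammaRV (k : ℕ) ω

/-- The nonzero coordinates of `v - u` have alternating signs: whenever `i < j` are
two "changed" coordinates with no changed coordinate strictly between them,
the changes have opposite signs. -/
def AltSigns {K : ℕ} (u v : Fin K → ℤ) : Prop :=
  ∀ i j : Fin K, i < j → u i ≠ v i → u j ≠ v j →
    (∀ l : Fin K, i < l → l < j → u l = v l) → v i - u i = -(v j - u j)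

/-- The first nonzero coordinate of `v - u` is negative if `s = true` (positive edges `E⁺`),
positive if `s = false` (negative edges `E⁻`). -/
def FirstSign {K : ℕ} (s : Bool) (u v : Fin K → ℤ) : Prop :=
  ∀ i : Fin K, u i ≠ v i → (∀ l : Fin K, l < i → u l = v l) →
    (if s then v i - u i < 0 else 0 < v i - u i)

/-- `(u,v)` is an edge of sign `s` of the multigraph `G_K`: either a loop (each vertex
carries one loop of each sign), or `u ≠ v` with alternating signs starting as dictated by `s`. -/
def IsEdge {K : ℕ} (s : Bool) (u v : Fin K → ℤ) : Prop :=
  u = v ∨ (u ≠ v ∧ AltSigns u v ∧ FirstSign s u v)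

/-- Interpret a Boolean vector as a vertex of `V_K = {-1,1}^K`. -/
def toPM {K : ℕ} (b : Fin K → Bool) : Fin K → ℤ := fun k => if b k then 1 else -1

/-- Partial sums `S_m = M_1 + ⋯ + M_m` of the block lengths. -/
def Ssum (M : ℕ → ℕ) (m : ℕ) : ℕ := ∑ k ∈ Finset.range m, M k

/-- 0-indexed block index of position `k` (positions `Ssum M j ≤ k < Ssum M (j+1)`
belong to block `j`). -/
def blk (M : ℕ → ℕ) (N : ℕ) (k : ℕ) : ℕ :=
  ((Finset.range N).filter (fun m => Ssum M (m + 1) ≤ k)).card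

/-- The vertex `a ∈ {-1,1}^K` whose maximal constancy blocks have lengths
`M_1, …, M_N` and whose first digit is `1` (so block `j` carries the value `(-1)^j`,
0-indexed). -/
def avert (M : ℕ → ℕ) (N : ℕ) {K : ℕ} : Fin K → ℤ :=
  fun k => if blk M N (k : ℕ) % 2 = 0 then 1 else -1

/-- Finite continued fraction: `cf [a₁, …, aₙ] = 1/(a₁ + 1/(a₂ + ⋯ + 1/(aₙ + 1)))`,
with `cf [] = 1`. -/
noncomputable def cf : List ℝ → ℝ
  | [] => 1
  | a :: l => 1 / (a + cf l)

/-- `x_j^N = [M_j; M_{j+1}, …, M_{N-1}, 1]` (0-indexed blocks `j, …, N-1`);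
for `j = N` this is the convention `x_{N+1}^N = 1`. -/
noncomputable def xcf (M : ℕ → ℕ) (N j : ℕ) : ℝ :=
  cf ((List.range (N - j)).map fun i => (M (j + i) : ℝ))

/-- `ε_j = 1`: the step of the walk changes a digit in the `j`-th (0-indexed)
constancy block, i.e. `B` differs from `A` at some position of block `j`. -/
def epsChange {K : ℕ} (M : ℕ → ℕ) (N : ℕ) (j : ℕ) (ω : Omega K) : Prop :=
  ∃ k : Fin K, blk M N (k : ℕ) = j ∧ BRV k ω ≠ ARV k ω

namespace Stmt1Aux

lemma ssum_mono (M : ℕ → ℕ) : Monotone (Ssum M) := fun _ _ h =>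
  Finset.sum_le_sum_of_subset (Finset.range_subset_range.2 h)

lemma blk_ge (M : ℕ → ℕ) (N k j : ℕ) (hj : j ≤ N) (h : Ssum M j ≤ k) : j ≤ blk M N k := by
  have hsub : Finset.range j ⊆ (Finset.range N).filter (fun m => Ssum M (m + 1) ≤ k) := by
    intro m hm
    rw [Finset.mem_range] at hm
    exact Finset.mem_filter.2 ⟨Finset.mem_range.2 (lt_of_lt_of_le hm hj),
      le_trans (ssum_mono M hm) h⟩
  simpa [blk] using Finset.card_le_card hsub

lemma blk_le' (M : ℕ → ℕ) (N k j : ℕ) (h : k < Ssum M (j + 1)) : blk M N k ≤ j := by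
  have hsub : (Finset.range N).filter (fun m => Ssum M (m + 1) ≤ k) ⊆ Finset.range j := by
    intro m hm
    rw [Finset.mem_filter] at hm
    rw [Finset.mem_range]
    by_contra hmj
    push_neg at hmj
    exact absurd (lt_of_le_of_lt (le_trans (ssum_mono M (by omega)) hm.2) h) (lt_irrefl _)
  simpa [blk] using Finset.card_le_card hsub

lemma blk_lt (M : ℕ → ℕ) (N k : ℕ) (hN : 0 < N) (hk : k < Ssum M N) : blk M N k < N := by
  have h1 : N - 1 + 1 = N := by omega
  have := blk_le' M N k (N - 1) (by rw [h1]; exact hk)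
  omega

lemma ssum_blk_le (M : ℕ → ℕ) (N k : ℕ) : Ssum M (blk M N k) ≤ k := by
  by_contra h
  push_neg at h
  rcases Nat.eq_zero_or_pos (blk M N k) with h0 | h0
  · rw [h0] at h; simp [Ssum] at h
  · have h1 : blk M N k - 1 + 1 = blk M N k := by omega
    have := blk_le' M N k (blk M N k - 1) (by rw [h1]; exact h)
    omega

lemma lt_ssum_blk (M : ℕ → ℕ) (N k : ℕ) (hN : 0 < N) (hk : k < Ssum M N) :
    k < Ssum M (blk M N k + 1) := by
  by_contra h
  push_neg at h
  have hlt := blk_lt M N k hN hk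
  have := blk_ge M N k (blk M N k + 1) (by omega) h
  omega

lemma blk_eq_iff (M : ℕ → ℕ) (N k j : ℕ) (hN : 0 < N) (hk : k < Ssum M N) :
    blk M N k = j ↔ Ssum M j ≤ k ∧ k < Ssum M (j + 1) := by
  constructor
  · rintro rfl
    exact ⟨ssum_blk_le M N k, lt_ssum_blk M N k hN hk⟩
  · rintro ⟨h1, h2⟩
    have hjN : j ≤ N := by
      by_contra hc
      push_neg at hc
      exact absurd hk (not_lt.2 (le_trans (ssum_mono M hc.le) h1))
    exact le_antisymm (blk_le' M N k j h2) (blk_ge M N k j hjN h1)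

lemma blk_mono (M : ℕ → ℕ) (N : ℕ) {k k' : ℕ} (h : k ≤ k') : blk M N k ≤ blk M N k' := by
  apply Finset.card_le_card
  intro m hm
  rw [Finset.mem_filter] at hm ⊢
  exact ⟨hm.1, le_trans hm.2 h⟩

lemma card_block {K : ℕ} (M : ℕ → ℕ) (N : ℕ) (hN : 0 < N) (hK : Ssum M N = K)
    (m : ℕ) (hm : m < N) :
    (Finset.univ.filter (fun k : Fin K => blk M N (k : ℕ) = m)).card = M m := by
  have hmem : ∀ k : Fin K, (k : ℕ) < Ssum M N := fun k => by rw [hK]; exact k.isLt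
  have hs1 : Ssum M (m + 1) ≤ K := by
    rw [← hK]; exact ssum_mono M (by omega)
  have key : (Finset.univ.filter (fun k : Fin K => blk M N (k : ℕ) = m)).card
      = (Finset.Ico (Ssum M m) (Ssum M (m + 1))).card := by
    apply Finset.card_bij' (i := fun (k : Fin K) _ => (k : ℕ))
      (j := fun n hn => (⟨n, lt_of_lt_of_le (Finset.mem_Ico.1 hn).2 hs1⟩ : Fin K))
    case hi =>
      intro k hk
      rw [Finset.mem_filter] at hk
      rw [Finset.mem_Ico]
      exact (blk_eq_iff M N k m hN (hmem k)).1 hk.2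
    case hj =>
      intro n hn
      rw [Finset.mem_filter]
      have hn' := Finset.mem_Ico.1 hn
      exact ⟨Finset.mem_univ _,
        (blk_eq_iff M N n m hN (by rw [hK]; exact lt_of_lt_of_le hn'.2 hs1)).2 hn'⟩
    case left_inv => intro k _; rfl
    case right_inv => intro n _; rfl
  rw [key, Nat.card_Ico]
  have : Ssum M (m + 1) = Ssum M m + M m := Finset.sum_range_succ M m
  omega

def abool (M : ℕ → ℕ) (N : ℕ) {K : ℕ} (k : Fin K) : Bool := decide (blk M N (k : ℕ) % 2 = 0)

def Alt2 (M : ℕ → ℕ) (N : ℕ) {K : ℕ} (s : Fin K → Bool) : Prop :=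
  ∀ i j : Fin K, i < j → s i = true → s j = true →
    (∀ l : Fin K, i < l → l < j → s l = false) →
    blk M N (i : ℕ) % 2 ≠ blk M N (j : ℕ) % 2

def phi (M : ℕ → ℕ) (N : ℕ) {K : ℕ} (s : Fin K → Bool) : Fin N → Bool :=
  fun m => decide (∃ k : Fin K, s k = true ∧ blk M N (k : ℕ) = (m : ℕ))

lemma change_iff (M : ℕ → ℕ) (N : ℕ) {K : ℕ} (b : Fin K → Bool) (k : Fin K) :
    toPM b k ≠ avert M N k ↔ (b k != abool M N k) = true := by
  cases hb : b k <;> by_cases h : blk M N (k : ℕ) % 2 = 0 <;>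
    simp [toPM, avert, abool, hb, h]

lemma concl_iff (M : ℕ → ℕ) (N : ℕ) {K : ℕ} (b : Fin K → Bool) (i j : Fin K)
    (hi : toPM b i ≠ avert M N i) (hj : toPM b j ≠ avert M N j) :
    (toPM b i - avert M N i = -(toPM b j - avert M N j)) ↔
      blk M N (i : ℕ) % 2 ≠ blk M N (j : ℕ) % 2 := by
  rcases Nat.mod_two_eq_zero_or_one (blk M N (i : ℕ)) with h1 | h1 <;>
    rcases Nat.mod_two_eq_zero_or_one (blk M N (j : ℕ)) with h2 | h2 <;>
    cases hbi : b i <;> cases hbj : b j <;>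
    simp_all [toPM, avert] <;> omega

lemma alt_iff (M : ℕ → ℕ) (N : ℕ) {K : ℕ} (b : Fin K → Bool) :
    AltSigns (avert M N) (toPM b) ↔ Alt2 M N (fun k => b k != abool M N k) := by
  unfold AltSigns Alt2
  apply forall_congr'; intro i
  apply forall_congr'; intro j
  apply imp_congr_right; intro _
  constructor
  · intro h hi hj hbet
    have hi' := (change_iff M N b i).2 hi
    have hj' := (change_iff M N b j).2 hj
    exact (concl_iff M N b i j hi' hj').1 <| h (Ne.symm hi') (Ne.symm hj') fun l h1 h2 => by
      have := hbet l h1 h2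
      by_contra hc
      rw [← Bool.not_eq_true] at this
      exact this ((change_iff M N b l).1 (Ne.symm hc))
  · intro h hi hj hbet
    have hi' := (change_iff M N b i).1 (Ne.symm hi)
    have hj' := (change_iff M N b j).1 (Ne.symm hj)
    refine (concl_iff M N b i j (Ne.symm hi) (Ne.symm hj)).2 <| h hi' hj' fun l h1 h2 => ?_
    rw [← Bool.not_eq_true]
    intro hc
    exact ((change_iff M N b l).2 hc).symm (hbet l h1 h2)

lemma ne_iff (M : ℕ → ℕ) (N : ℕ) {K : ℕ} (b : Fin K → Bool) :
    toPM b ≠ avert M N ↔ (fun k => b k != abool M N k) ≠ (fun _ => false) := by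
  rw [not_iff_not, funext_iff, funext_iff]
  apply forall_congr'; intro k
  constructor
  · intro h
    by_contra hc
    exact (change_iff M N b k).2 (Bool.ne_false_iff.1 hc) h
  · intro h
    by_contra hc
    have := (change_iff M N b k).1 hc
    simp [h] at this

lemma fin_lt_of_blk_lt (M : ℕ → ℕ) (N : ℕ) {K : ℕ} {k k' : Fin K}
    (h : blk M N (k : ℕ) < blk M N (k' : ℕ)) : k < k' := by
  by_contra hc
  push_neg at hc
  exact absurd (blk_mono M N (Fin.le_iff_val_le_val.1 hc)) (by omega)

lemma no_two_in_block (M : ℕ → ℕ) (N : ℕ) {K : ℕ} (s : Fin K → Bool) (hs : Alt2 M N s)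
    {k k' : Fin K} (h : k < k') (h1 : s k = true) (h2 : s k' = true) :
    blk M N (k : ℕ) ≠ blk M N (k' : ℕ) := by
  intro hb
  set T := Finset.univ.filter (fun l : Fin K => s l = true ∧ k < l) with hT
  have hk'T : k' ∈ T := by simp [hT, h2, h]
  have hTne : T.Nonempty := ⟨k', hk'T⟩
  set j := T.min' hTne with hj
  have hjT : j ∈ T := T.min'_mem hTne
  rw [hT, Finset.mem_filter] at hjT
  obtain ⟨-, hsj, hkj⟩ := hjT
  have hjk' : j ≤ k' := T.min'_le k' hk'T
  have hbet : ∀ l : Fin K, k < l → l < j → s l = false := by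
    intro l hl1 hl2
    by_contra hc
    have hlT : l ∈ T := by
      rw [hT, Finset.mem_filter]
      exact ⟨Finset.mem_univ _, Bool.ne_false_iff.1 hc, hl1⟩
    exact absurd (T.min'_le l hlT) (not_le.2 hl2)
  have e1 : blk M N (k : ℕ) ≤ blk M N (j : ℕ) := blk_mono M N (le_of_lt hkj)
  have e2 : blk M N (j : ℕ) ≤ blk M N (k' : ℕ) := blk_mono M N hjk'
  exact hs k j hkj h1 hsj hbet (by omega)

lemma uniq_in_block (M : ℕ → ℕ) (N : ℕ) {K : ℕ} (s : Fin K → Bool) (hs : Alt2 M N s)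
    {k k' : Fin K} (h1 : s k = true) (h2 : s k' = true)
    (hb : blk M N (k : ℕ) = blk M N (k' : ℕ)) : k = k' := by
  rcases lt_trichotomy k k' with h | h | h
  · exact absurd hb (no_two_in_block M N s hs h h1 h2)
  · exact h
  · exact absurd hb.symm (no_two_in_block M N s hs h h2 h1)

lemma phi_gap (M : ℕ → ℕ) (N : ℕ) {K : ℕ} (hN : 0 < N) (hK : Ssum M N = K)
    (s : Fin K → Bool) (hs : Alt2 M N s) (m m' : Fin N) (hmm : m < m')
    (hm : phi M N s m = true) (hm' : phi M N s m' = true)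
    (hbet : ∀ i : Fin N, m < i → i < m' → phi M N s i = false) :
    Odd ((m' : ℕ) - (m : ℕ)) := by
  rw [phi, decide_eq_true_eq] at hm hm'
  obtain ⟨k, hk, hbk⟩ := hm
  obtain ⟨k', hk', hbk'⟩ := hm'
  have hmm' : (m : ℕ) < (m' : ℕ) := hmm
  set T1 := Finset.univ.filter (fun l : Fin K => s l = true ∧ blk M N (l : ℕ) = (m : ℕ)) with hT1
  have hkT1 : k ∈ T1 := by simp [hT1, hk, hbk]
  have hT1ne : T1.Nonempty := ⟨k, hkT1⟩
  set i0 := T1.max' hT1ne with hi0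
  have hi0T : i0 ∈ T1 := T1.max'_mem hT1ne
  rw [hT1, Finset.mem_filter] at hi0T
  obtain ⟨-, hsi0, hbi0⟩ := hi0T
  have hi0k' : i0 < k' := fin_lt_of_blk_lt M N (by omega)
  set T2 := Finset.univ.filter (fun l : Fin K => s l = true ∧ i0 < l ∧ l ≤ k') with hT2
  have hk'T2 : k' ∈ T2 := by simp [hT2, hk', hi0k']
  have hT2ne : T2.Nonempty := ⟨k', hk'T2⟩
  set j := T2.min' hT2ne with hj
  have hjT : j ∈ T2 := T2.min'_mem hT2ne
  rw [hT2, Finset.mem_filter] at hjT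
  obtain ⟨-, hsj, hi0j, hjk'⟩ := hjT
  have e1 : blk M N (i0 : ℕ) ≤ blk M N (j : ℕ) := blk_mono M N (le_of_lt hi0j)
  have e2 : blk M N (j : ℕ) ≤ blk M N (k' : ℕ) := blk_mono M N hjk'
  have hne : blk M N (j : ℕ) ≠ (m : ℕ) := by
    intro hc
    have : j ∈ T1 := by simp [hT1, hsj, hc]
    exact absurd (T1.le_max' j this) (not_le.2 hi0j)
  have hbj : blk M N (j : ℕ) = (m' : ℕ) := by
    by_contra hc
    have hlt : blk M N (j : ℕ) < N := by
      have : (j : ℕ) < Ssum M N := by rw [hK]; exact j.isLt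
      exact blk_lt M N _ hN this
    have h1 : phi M N s ⟨blk M N (j : ℕ), hlt⟩ = false := by
      apply hbet <;> rw [Fin.lt_def] <;> simp <;> omega
    rw [phi, decide_eq_false_iff_not] at h1
    exact h1 ⟨j, hsj, rfl⟩
  have hbetw : ∀ l : Fin K, i0 < l → l < j → s l = false := by
    intro l hl1 hl2
    by_contra hc
    have hlT : l ∈ T2 := by
      rw [hT2, Finset.mem_filter]
      exact ⟨Finset.mem_univ _, Bool.ne_false_iff.1 hc, hl1, le_of_lt (lt_of_lt_of_le hl2 hjk')⟩
    exact absurd (T2.min'_le l hlT) (not_le.2 hl2)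
  have hpar := hs i0 j hi0j hsi0 hsj hbetw
  rw [Nat.odd_iff]
  omega

def sOf (M : ℕ → ℕ) (N : ℕ) {K : ℕ} {ε : Fin N → Bool}
    (f : ∀ m : {m : Fin N // ε m = true}, {k : Fin K // blk M N (k : ℕ) = ((m : Fin N) : ℕ)}) :
    Fin K → Bool :=
  fun k => decide (∃ m : {m : Fin N // ε m = true}, ((f m : Fin K) = k))

lemma sOf_spec (M : ℕ → ℕ) (N : ℕ) {K : ℕ} {ε : Fin N → Bool}
    (f : ∀ m : {m : Fin N // ε m = true}, {k : Fin K // blk M N (k : ℕ) = ((m : Fin N) : ℕ)})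
    (k : Fin K) :
    sOf M N f k = true ↔ ∃ m : {m : Fin N // ε m = true}, ((f m : Fin K) = k) := by
  rw [sOf, decide_eq_true_eq]

lemma sOf_alt (M : ℕ → ℕ) (N : ℕ) {K : ℕ} {ε : Fin N → Bool}
    (hgap : ∀ m m' : Fin N, m < m' → ε m = true → ε m' = true →
      (∀ i : Fin N, m < i → i < m' → ε i = false) → Odd ((m' : ℕ) - (m : ℕ)))
    (f : ∀ m : {m : Fin N // ε m = true}, {k : Fin K // blk M N (k : ℕ) = ((m : Fin N) : ℕ)}) :
    Alt2 M N (sOf M N f) := by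
  intro i j hij hi hj hbet
  obtain ⟨mi, hmi⟩ := (sOf_spec M N f i).1 hi
  obtain ⟨mj, hmj⟩ := (sOf_spec M N f j).1 hj
  have hbki : blk M N (i : ℕ) = ((mi : Fin N) : ℕ) := by rw [← hmi]; exact (f mi).2
  have hbkj : blk M N (j : ℕ) = ((mj : Fin N) : ℕ) := by rw [← hmj]; exact (f mj).2
  have hmile : ((mi : Fin N) : ℕ) ≤ ((mj : Fin N) : ℕ) := by
    rw [← hbki, ← hbkj]; exact blk_mono M N (le_of_lt hij)
  have hmij : ((mi : Fin N) : ℕ) < ((mj : Fin N) : ℕ) := by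
    rcases lt_or_eq_of_le hmile with h | h
    · exact h
    · exfalso
      have : mi = mj := Subtype.ext (Fin.ext h)
      rw [this, hmj] at hmi
      exact absurd hmi.symm (ne_of_lt hij)
  have hmid : ∀ i' : Fin N, (mi : Fin N) < i' → i' < (mj : Fin N) → ε i' = false := by
    intro μ h1 h2
    by_contra hc
    have hc' : ε μ = true := Bool.ne_false_iff.1 hc
    set l : Fin K := (f ⟨μ, hc'⟩ : Fin K) with hl
    have hbl : blk M N (l : ℕ) = (μ : ℕ) := (f ⟨μ, hc'⟩).2
    have hil : i < l := fin_lt_of_blk_lt M N (by rw [hbki, hbl]; exact h1)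
    have hlj : l < j := fin_lt_of_blk_lt M N (by rw [hbkj, hbl]; exact h2)
    have := hbet l hil hlj
    rw [sOf, decide_eq_false_iff_not] at this
    exact this ⟨⟨μ, hc'⟩, rfl⟩
  have hodd := hgap (mi : Fin N) (mj : Fin N) (Fin.lt_def.2 hmij) mi.2 mj.2 hmid
  rw [Nat.odd_iff] at hodd
  rw [hbki, hbkj]
  omega

lemma phi_sOf (M : ℕ → ℕ) (N : ℕ) {K : ℕ} {ε : Fin N → Bool}
    (f : ∀ m : {m : Fin N // ε m = true}, {k : Fin K // blk M N (k : ℕ) = ((m : Fin N) : ℕ)}) :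
    phi M N (sOf M N f) = ε := by
  funext m
  cases hε : ε m with
  | false =>
    rw [phi, decide_eq_false_iff_not]
    rintro ⟨k, hk, hbk⟩
    obtain ⟨m', hm'⟩ := (sOf_spec M N f k).1 hk
    have : ((m' : Fin N) : ℕ) = (m : ℕ) := by rw [← hbk, ← hm']; exact ((f m').2).symm
    have hmm : (m' : Fin N) = m := Fin.ext this
    rw [← hmm, m'.2] at hε
    simp at hε
  | true =>
    rw [phi, decide_eq_true_eq]
    exact ⟨(f ⟨m, hε⟩ : Fin K), (sOf_spec M N f _).2 ⟨⟨m, hε⟩, rfl⟩, (f ⟨m, hε⟩).2⟩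

lemma sOf_ne (M : ℕ → ℕ) (N : ℕ) {K : ℕ} {ε : Fin N → Bool}
    (hε : ε ≠ fun _ => false)
    (f : ∀ m : {m : Fin N // ε m = true}, {k : Fin K // blk M N (k : ℕ) = ((m : Fin N) : ℕ)}) :
    sOf M N f ≠ fun _ => false := by
  obtain ⟨m, hm⟩ := Function.ne_iff.1 hε
  have hm' : ε m = true := Bool.ne_false_iff.1 hm
  intro hc
  have : sOf M N f (f ⟨m, hm'⟩ : Fin K) = true := (sOf_spec M N f _).2 ⟨⟨m, hm'⟩, rfl⟩
  rw [hc] at this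
  exact Bool.false_ne_true this

lemma sOf_inj (M : ℕ → ℕ) (N : ℕ) {K : ℕ} {ε : Fin N → Bool}
    (f g : ∀ m : {m : Fin N // ε m = true}, {k : Fin K // blk M N (k : ℕ) = ((m : Fin N) : ℕ)})
    (h : sOf M N f = sOf M N g) : f = g := by
  funext m
  have h1 : sOf M N g (f m : Fin K) = true := by
    rw [← h]; exact (sOf_spec M N f _).2 ⟨m, rfl⟩
  obtain ⟨m', hm'⟩ := (sOf_spec M N g _).1 h1
  have : ((m' : Fin N) : ℕ) = ((m : Fin N) : ℕ) := by
    rw [← (f m).2, ← hm']; exact ((g m').2).symm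
  have hmm : m' = m := Subtype.ext (Fin.ext this)
  rw [hmm] at hm'
  exact Subtype.ext hm'.symm

lemma sOf_surj (M : ℕ → ℕ) (N : ℕ) {K : ℕ} (hN : 0 < N) (hK : Ssum M N = K)
    {ε : Fin N → Bool} (s : Fin K → Bool) (hs : Alt2 M N s) (hphi : phi M N s = ε) :
    ∃ f : ∀ m : {m : Fin N // ε m = true}, {k : Fin K // blk M N (k : ℕ) = ((m : Fin N) : ℕ)},
      sOf M N f = s := by
  have hex : ∀ m : {m : Fin N // ε m = true},
      ∃ k : Fin K, s k = true ∧ blk M N (k : ℕ) = ((m : Fin N) : ℕ) := by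
    intro m
    have : phi M N s (m : Fin N) = true := by rw [hphi]; exact m.2
    rwa [phi, decide_eq_true_eq] at this
  refine ⟨fun m => ⟨(hex m).choose, (hex m).choose_spec.2⟩, ?_⟩
  funext k
  cases hsk : s k with
  | true =>
    have hlt : blk M N (k : ℕ) < N := blk_lt M N _ hN (by rw [hK]; exact k.isLt)
    set m0 : Fin N := ⟨blk M N (k : ℕ), hlt⟩ with hm0
    have hphim : phi M N s m0 = true := by
      rw [phi, decide_eq_true_eq]; exact ⟨k, hsk, rfl⟩
    have hεm : ε m0 = true := by rw [← hphi]; exact hphim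
    have hchoose := (hex ⟨m0, hεm⟩).choose_spec
    have heq : (hex ⟨m0, hεm⟩).choose = k :=
      uniq_in_block M N s hs hchoose.1 hsk (by rw [hchoose.2])
    exact (sOf_spec M N _ k).2 ⟨⟨m0, hεm⟩, heq⟩
  | false =>
    rw [sOf, decide_eq_false_iff_not]
    rintro ⟨m, hm⟩
    have h2 : s k = true := by rw [← hm]; exact (hex m).choose_spec.1
    rw [hsk] at h2
    exact Bool.false_ne_true h2

open scoped Classical in
lemma fiber_card (M : ℕ → ℕ) (N K : ℕ) (hN : 0 < N) (hK : Ssum M N = K)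
    (ε : Fin N → Bool) (hne : ε ≠ fun _ => false)
    (hgap : ∀ m m' : Fin N, m < m' → ε m = true → ε m' = true →
      (∀ i : Fin N, m < i → i < m' → ε i = false) → Odd ((m' : ℕ) - (m : ℕ))) :
    (Finset.univ.filter (fun s : Fin K → Bool =>
        ((s ≠ fun _ => false) ∧ Alt2 M N s) ∧ phi M N s = ε)).card
      = ∏ m ∈ Finset.univ.filter (fun m : Fin N => ε m = true), M (m : ℕ) := by
  classical
  have hcard : (Finset.univ :
      Finset (∀ m : {m : Fin N // ε m = true},
        {k : Fin K // blk M N (k : ℕ) = ((m : Fin N) : ℕ)})).card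
      = (Finset.univ.filter (fun s : Fin K → Bool =>
        ((s ≠ fun _ => false) ∧ Alt2 M N s) ∧ phi M N s = ε)).card := by
    apply Finset.card_bij (i := fun f _ => sOf M N f)
    · intro f _
      rw [Finset.mem_filter]
      exact ⟨Finset.mem_univ _, ⟨sOf_ne M N hne f, sOf_alt M N hgap f⟩, phi_sOf M N f⟩
    · intro f _ g _ h
      exact sOf_inj M N f g h
    · intro s hsmem
      rw [Finset.mem_filter] at hsmem
      obtain ⟨-, ⟨-, hs⟩, hphi⟩ := hsmem
      obtain ⟨f, hf⟩ := sOf_surj M N hN hK s hs hphi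
      exact ⟨f, Finset.mem_univ _, hf⟩
  rw [← hcard, Finset.card_univ, Fintype.card_pi]
  rw [Finset.prod_subtype (Finset.univ.filter (fun m : Fin N => ε m = true))
    (p := fun m => ε m = true) (by simp) (fun m : Fin N => M (m : ℕ))]
  apply Finset.prod_congr rfl
  intro m _
  rw [Fintype.card_subtype]
  exact card_block M N hN hK _ (Fin.is_lt _)

lemma phi_good (M : ℕ → ℕ) (N K : ℕ) (hN : 0 < N) (hK : Ssum M N = K)
    (s : Fin K → Bool) (hs_ne : s ≠ fun _ => false) (hs : Alt2 M N s) :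
    (phi M N s ≠ fun _ => false) ∧
      (∀ m m' : Fin N, m < m' → phi M N s m = true → phi M N s m' = true →
        (∀ i : Fin N, m < i → i < m' → phi M N s i = false) →
        Odd ((m' : ℕ) - (m : ℕ))) := by
  constructor
  · obtain ⟨k, hk⟩ := Function.ne_iff.1 hs_ne
    have hk' : s k = true := Bool.ne_false_iff.1 hk
    have hlt : blk M N (k : ℕ) < N := blk_lt M N _ hN (by rw [hK]; exact k.isLt)
    apply Function.ne_iff.2
    refine ⟨⟨blk M N (k : ℕ), hlt⟩, ?_⟩
    have hp : phi M N s ⟨blk M N (k : ℕ), hlt⟩ = true := by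
      rw [phi, decide_eq_true_eq]; exact ⟨k, hk', rfl⟩
    simp [hp]
  · exact phi_gap M N hN hK s hs

end Stmt1Aux

open Stmt1Aux in
open scoped Classical in
/-- The number of neighbors `b ≠ a` of a vertex `a` with constancy blocks of lengths
`M_0, …, M_{N-1}` equals the sum, over nonzero patterns `ε ∈ {0,1}^N` in which two
`1`s with only `0`s strictly between them must have odd index gap, of `∏_{m : ε_m = 1} M_m`. -/
theorem stmt1 (K N : ℕ) (M : ℕ → ℕ) (hN : 0 < N) (hM : ∀ m < N, 0 < M m)
    (hK : ∑ m ∈ Finset.range N, M m = K) :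
    Nat.card {b : Fin K → Bool //
        toPM b ≠ avert M N ∧ AltSigns (avert M N) (toPM b)} =
      ∑ ε : Fin N → Bool,
        if (ε ≠ fun _ => false) ∧
            (∀ m m' : Fin N, m < m' → ε m = true → ε m' = true →
              (∀ i : Fin N, m < i → i < m' → ε i = false) →
              Odd ((m' : ℕ) - (m : ℕ)))
        then ∏ m ∈ Finset.univ.filter (fun m : Fin N => ε m = true), M (m : ℕ)
        else 0 := by
  classical
  have hKS : Ssum M N = K := hK
  rw [Nat.card_eq_fintype_card, Fintype.card_subtype]
  have hstep1 : (Finset.univ.filter (fun b : Fin K → Bool =>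
        toPM b ≠ avert M N ∧ AltSigns (avert M N) (toPM b))).card
      = (Finset.univ.filter (fun s : Fin K → Bool =>
        (s ≠ fun _ => false) ∧ Alt2 M N s)).card := by
    apply Finset.card_bij (i := fun b _ => fun k => b k != abool M N k)
    · intro b hb
      rw [Finset.mem_filter] at hb ⊢
      exact ⟨Finset.mem_univ _, (ne_iff M N b).1 hb.2.1, (alt_iff M N b).1 hb.2.2⟩
    · intro b _ b' _ h
      funext k
      have h2 := congrFun h k
      cases habool : abool M N k <;> cases hb : b k <;> cases hb' : b' k <;> simp_all
    · intro s hsmem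
      rw [Finset.mem_filter] at hsmem
      set b : Fin K → Bool := fun k => s k != abool M N k with hbdef
      have hib : (fun k => b k != abool M N k) = s := by
        funext k
        simp only [hbdef]
        cases hsk : s k <;> cases ha : abool M N k <;> simp [hsk, ha]
      refine ⟨b, ?_, hib⟩
      rw [Finset.mem_filter]
      refine ⟨Finset.mem_univ _, ?_, ?_⟩
      · rw [ne_iff M N b, hib]; exact hsmem.2.1
      · rw [alt_iff M N b, hib]; exact hsmem.2.2
  rw [hstep1, Finset.card_eq_sum_card_fiberwise (f := phi M N) (t := Finset.univ)
    (fun s _ => Finset.mem_univ _)]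
  apply Finset.sum_congr rfl
  intro ε _
  rw [Finset.filter_filter]
  by_cases hQ : (ε ≠ fun _ => false) ∧
      (∀ m m' : Fin N, m < m' → ε m = true → ε m' = true →
        (∀ i : Fin N, m < i → i < m' → ε i = false) → Odd ((m' : ℕ) - (m : ℕ)))
  · rw [if_pos hQ]
    exact fiber_card M N K hN hKS ε hQ.1 hQ.2
  · rw [if_neg hQ]
    rw [Finset.card_eq_zero, Finset.eq_empty_iff_forall_notMem]
    intro s hs
    rw [Finset.mem_filter] at hs
    obtain ⟨-, ⟨hne, halt⟩, hphi⟩ := hs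
    apply hQ
    rw [← hphi]
    exact phi_good M N K hN hKS s hne halt
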